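/- Let F be a field and let A and B be unital locally matrix F-algebras whose dimensions over F are at most countably infinite. Then A and B are isomorphic as F-algebras if and only if D(A) = D(B). -/

import Mathlib

/-- `D(A)`: the set of positive integers `n` such that `A` contains a unital subalgebra
isomorphic to the `n × n` matrix algebra over `F`. -/
def matrixDegreeSet (F : Type*) [Field F] (A : Type*) [Ring A] [Algebra F A] : Set ℕ :=
  {n | 0 < n ∧ ∃ S : Subalgebra F A, Nonempty (S ≃ₐ[F] Matrix (Fin n) (Fin n) F)}

/-- A unital `F`-algebra is a locally matrix algebra if every finite subset lies in a
unital subalgebra isomorphic to a matrix algebra `M_n(F)`, `n ≥ 1`. -/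
def IsLocallyMatrixAlgebra (F : Type*) [Field F] (A : Type*) [Ring A] [Algebra F A] : Prop :=
  ∀ s : Finset A, ∃ (n : ℕ) (S : Subalgebra F A), 0 < n ∧ (s : Set A) ⊆ S ∧
    Nonempty (S ≃ₐ[F] Matrix (Fin n) (Fin n) F)


open Matrix

namespace LMA

variable {F : Type*} [Field F]

abbrev M (F : Type*) [Field F] (n : ℕ) := Matrix (Fin n) (Fin n) F

variable {m n N : ℕ}

lemma sum_mulVec {ι : Type*} (s : Finset ι) (A : ι → M F N) (v : Fin N → F) :
    ∑ i ∈ s, (A i) *ᵥ v = (∑ i ∈ s, A i) *ᵥ v := by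
  classical
  induction s using Finset.induction with
  | empty => simp
  | insert _ _ h ih => simp [Finset.sum_insert h, Matrix.add_mulVec, ih]

lemma sum_diag_eq_one : ∑ i : Fin m, Matrix.single i i (1:F) = 1 := by
  ext a b
  by_cases h : a = b
  · subst h; simp [Matrix.sum_apply, Matrix.one_apply, Finset.sum_ite_eq, Matrix.single]
  · simp only [Matrix.sum_apply, Matrix.one_apply, h, if_neg h]
    refine Finset.sum_eq_zero fun i _ => ?_
    exact Matrix.single_apply_of_ne _ _ _ _ _ (by rintro ⟨rfl, rfl⟩; exact h rfl)

/-- The corner submodule `W = range (φ E₀₀)` of `F^N` for a unital hom `φ : M m →ₐ M N`. -/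
noncomputable def corner (hm : 0 < m) (φ : M F m →ₐ[F] M F N) : Submodule F (Fin N → F) :=
  LinearMap.range (Matrix.mulVecLin (φ (Matrix.single ⟨0, hm⟩ ⟨0, hm⟩ 1)))

lemma corner_fix (hm : 0 < m) (φ : M F m →ₐ[F] M F N) {w : Fin N → F}
    (hw : w ∈ corner hm φ) : (φ (Matrix.single ⟨0, hm⟩ ⟨0, hm⟩ 1)) *ᵥ w = w := by
  obtain ⟨v, rfl⟩ := hw
  rw [Matrix.mulVecLin_apply, Matrix.mulVec_mulVec, ← _root_.map_mul,
    Matrix.single_mul_single_same, one_mul]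

/-- forward map `F^N →ₗ (Fin m → corner)`. -/
noncomputable def fwd (hm : 0 < m) (φ : M F m →ₐ[F] M F N) :
    (Fin N → F) →ₗ[F] (Fin m → corner hm φ) where
  toFun v i := ⟨(φ (Matrix.single ⟨0, hm⟩ i 1)).mulVec v, by
    refine ⟨(φ (Matrix.single ⟨0, hm⟩ i 1)).mulVec v, ?_⟩
    rw [Matrix.mulVecLin_apply, Matrix.mulVec_mulVec, ← _root_.map_mul,
      Matrix.single_mul_single_same, one_mul]⟩
  map_add' v w := by ext i; simp [Matrix.mulVec_add]
  map_smul' c v := by ext i; simp [Matrix.mulVec_smul]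

noncomputable def bwd (hm : 0 < m) (φ : M F m →ₐ[F] M F N) :
    (Fin m → corner hm φ) →ₗ[F] (Fin N → F) where
  toFun w := ∑ i, (φ (Matrix.single i ⟨0, hm⟩ 1)).mulVec (w i)
  map_add' v w := by simp [Matrix.mulVec_add, Finset.sum_add_distrib]
  map_smul' c v := by simp [Matrix.mulVec_smul, Finset.smul_sum]

lemma bwd_fwd (hm : 0 < m) (φ : M F m →ₐ[F] M F N) (v : Fin N → F) :
    bwd hm φ (fwd hm φ v) = v := by
  simp only [bwd, fwd, LinearMap.coe_mk, AddHom.coe_mk, Matrix.mulVec_mulVec, ← _root_.map_mul,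
    Matrix.single_mul_single_same, one_mul]
  rw [sum_mulVec, ← map_sum, sum_diag_eq_one, _root_.map_one, Matrix.one_mulVec]

lemma fwd_bwd (hm : 0 < m) (φ : M F m →ₐ[F] M F N) (w : Fin m → corner hm φ) :
    fwd hm φ (bwd hm φ w) = w := by
  classical
  funext j
  apply Subtype.ext
  show φ (Matrix.single ⟨0, hm⟩ j 1) *ᵥ (∑ i, (φ (Matrix.single i ⟨0, hm⟩ 1)) *ᵥ ↑(w i))
      = ↑(w j)
  rw [← Matrix.mulVecLin_apply, map_sum]
  have key : ∀ i : Fin m, Matrix.single (⟨0, hm⟩ : Fin m) j (1:F) * Matrix.single i ⟨0, hm⟩ 1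
      = if i = j then Matrix.single ⟨0, hm⟩ ⟨0, hm⟩ 1 else 0 := by
    intro i
    by_cases h : i = j
    · subst h; rw [if_pos rfl, Matrix.single_mul_single_same, one_mul]
    · rw [if_neg h]
      exact Matrix.single_mul_single_of_ne (i := (⟨0,hm⟩ : Fin m)) (j := j) (c := (1:F)) (k := i)
        (fun hh => h hh.symm) 1
  simp only [Matrix.mulVecLin_apply, Matrix.mulVec_mulVec, ← _root_.map_mul, key]
  rw [Finset.sum_eq_single j (fun i _ hij => by rw [if_neg hij, _root_.map_zero, Matrix.zero_mulVec])
    (by simp)]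
  rw [if_pos rfl]
  exact corner_fix hm φ (w j).2

noncomputable def cornerEquiv (hm : 0 < m) (φ : M F m →ₐ[F] M F N) :
    (Fin N → F) ≃ₗ[F] (Fin m → corner hm φ) :=
  LinearEquiv.ofLinear (fwd hm φ) (bwd hm φ)
    (LinearMap.ext fun w => fwd_bwd hm φ w) (LinearMap.ext fun v => bwd_fwd hm φ v)

lemma dim_eq (hm : 0 < m) (φ : M F m →ₐ[F] M F N) :
    N = m * Module.finrank F (corner hm φ) := by
  have h1 : Module.finrank F (Fin N → F) = N := by simp [Module.finrank_pi]
  have h2 := (cornerEquiv hm φ).finrank_eq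
  rw [h1] at h2
  exact h2.trans (by rw [Module.finrank_pi_fintype]; simp [Finset.sum_const, mul_comm])

lemma dvd_of_algHom (hm : 0 < m) (φ : M F m →ₐ[F] M F N) : m ∣ N :=
  ⟨_, dim_eq hm φ⟩

lemma fwd_mulVec (hm : 0 < m) (φ : M F m →ₐ[F] M F N) (k l : Fin m) (c : F) (v : Fin N → F) :
    fwd hm φ (φ (Matrix.single k l c) *ᵥ v) = Pi.single k (c • (fwd hm φ v l)) := by
  classical
  funext i
  apply Subtype.ext
  show φ (Matrix.single ⟨0, hm⟩ i 1) *ᵥ (φ (Matrix.single k l c) *ᵥ v) = _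
  rw [Matrix.mulVec_mulVec, ← _root_.map_mul]
  by_cases h : i = k
  · subst h
    rw [Matrix.single_mul_single_same, one_mul, Pi.single_eq_same]
    show _ = ((c • (fwd hm φ v l) : corner hm φ) : Fin N → F)
    rw [Submodule.coe_smul]
    show _ = c • (φ (Matrix.single ⟨0, hm⟩ l 1) *ᵥ v)
    rw [show Matrix.single (⟨0,hm⟩ : Fin m) l c = c • Matrix.single (⟨0,hm⟩ : Fin m) l (1:F) by
      rw [Matrix.smul_single, smul_eq_mul, mul_one], _root_.map_smul,
      Matrix.smul_mulVec]
  · rw [Pi.single_eq_of_ne h]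
    rw [Matrix.single_mul_single_of_ne (i := (⟨0,hm⟩ : Fin m)) (j := i) (c := (1:F)) (k := k)
      h c, _root_.map_zero, Matrix.zero_mulVec]
    rfl

lemma bwd_single (hm : 0 < m) (φ : M F m →ₐ[F] M F N) (k : Fin m) (w : corner hm φ) :
    bwd hm φ (Pi.single k w) = φ (Matrix.single k ⟨0, hm⟩ 1) *ᵥ (w : Fin N → F) := by
  classical
  show (∑ i, (φ (Matrix.single i ⟨0, hm⟩ 1)).mulVec ((Pi.single k w : Fin m → corner hm φ) i : Fin N → F)) = _
  rw [Finset.sum_eq_single k]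
  · rw [Pi.single_eq_same]
  · intro i _ hik
    rw [Pi.single_eq_of_ne hik]
    show (φ (Matrix.single i ⟨0, hm⟩ 1)).mulVec (((0 : corner hm φ) : Fin N → F)) = 0
    rw [Submodule.coe_zero, Matrix.mulVec_zero]
  · simp

lemma piCongr_single {W₁ W₂ : Type*} [AddCommMonoid W₁] [Module F W₁] [AddCommMonoid W₂]
    [Module F W₂] (g : W₁ ≃ₗ[F] W₂) (k : Fin m) (x : W₁) :
    (LinearEquiv.piCongrRight fun _ : Fin m => g) (Pi.single k x) = Pi.single k (g x) := by
  classical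
  funext i
  rw [LinearEquiv.piCongrRight_apply]
  rcases eq_or_ne i k with rfl | h
  · rw [Pi.single_eq_same, Pi.single_eq_same]
  · rw [Pi.single_eq_of_ne h, Pi.single_eq_of_ne h, map_zero]

lemma mulVec_bwd (hm : 0 < m) (ψ : M F m →ₐ[F] M F N) (k l : Fin m) (c : F)
    (w : Fin m → corner hm ψ) :
    ψ (Matrix.single k l c) *ᵥ bwd hm ψ w
      = ψ (Matrix.single k ⟨0,hm⟩ c) *ᵥ ((w l : Fin N → F)) := by
  classical
  show ψ _ *ᵥ (∑ i, (ψ (Matrix.single i ⟨0, hm⟩ 1)).mulVec (w i)) = _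
  rw [← Matrix.mulVecLin_apply, map_sum]
  simp only [Matrix.mulVecLin_apply, Matrix.mulVec_mulVec, ← _root_.map_mul]
  rw [Finset.sum_eq_single l]
  · rw [Matrix.single_mul_single_same, mul_one]
  · intro i _ hil
    rw [Matrix.single_mul_single_of_ne (i := k) (j := l) (c := c) (k := i)
      (fun hh => hil hh.symm) 1, _root_.map_zero, Matrix.zero_mulVec]
  · simp

/-- Skolem–Noether for matrix algebras: any two unital homs `M_m → M_N` differ by an
automorphism of `M_N`. -/
theorem skolem_noether (hm : 0 < m) (φ ψ : M F m →ₐ[F] M F N) :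
    ∃ θ : M F N ≃ₐ[F] M F N, ∀ x, θ (φ x) = ψ x := by
  classical
  -- corners have equal finrank
  have hrk : Module.finrank F (corner hm φ) = Module.finrank F (corner hm ψ) := by
    have := (dim_eq hm φ).symm.trans (dim_eq hm ψ)
    exact Nat.eq_of_mul_eq_mul_left hm this
  obtain ⟨g⟩ := FiniteDimensional.nonempty_linearEquiv_of_finrank_eq hrk
  set u : (Fin N → F) ≃ₗ[F] (Fin N → F) :=
    (cornerEquiv hm φ).trans ((LinearEquiv.piCongrRight fun _ => g).trans
      (cornerEquiv hm ψ).symm) with hu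
  -- intertwining on basic matrices
  have inter : ∀ (x : M F m) (v : Fin N → F), u (φ x *ᵥ v) = ψ x *ᵥ u v := by
    have base : ∀ (k l : Fin m) (c : F) (v : Fin N → F),
        u (φ (Matrix.single k l c) *ᵥ v) = ψ (Matrix.single k l c) *ᵥ u v := by
      intro k l c v
      have lhs1 : u (φ (Matrix.single k l c) *ᵥ v)
          = ψ (Matrix.single k ⟨0,hm⟩ 1) *ᵥ (c • ((g (fwd hm φ v l) : corner hm ψ) : Fin N → F)) := by
        rw [hu]
        show bwd hm ψ ((LinearEquiv.piCongrRight fun _ : Fin m => g)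
          (fwd hm φ (φ (Matrix.single k l c) *ᵥ v))) = _
        rw [fwd_mulVec, piCongr_single, bwd_single, _root_.map_smul]
        rfl
      have rhs1 : ψ (Matrix.single k l c) *ᵥ u v
          = ψ (Matrix.single k ⟨0,hm⟩ c) *ᵥ ((g (fwd hm φ v l) : corner hm ψ) : Fin N → F) := by
        rw [hu]
        show ψ _ *ᵥ bwd hm ψ ((LinearEquiv.piCongrRight fun _ : Fin m => g) (fwd hm φ v)) = _
        rw [mulVec_bwd]
        rfl
      rw [lhs1, rhs1, show Matrix.single k (⟨0,hm⟩ : Fin m) c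
          = c • Matrix.single k (⟨0,hm⟩ : Fin m) (1:F) by
        rw [Matrix.smul_single, smul_eq_mul, mul_one], _root_.map_smul,
        Matrix.smul_mulVec, Matrix.mulVec_smul]
    intro x v
    rw [Matrix.matrix_eq_sum_single x]
    simp only [map_sum, ← sum_mulVec, map_sum, base]
  -- build the automorphism
  have h1 : u.conj 1 = 1 := by rw [Module.End.one_eq_id]; exact u.conj_id
  have h2 : ∀ f g' : Module.End F (Fin N → F), u.conj (f * g') = u.conj f * u.conj g' := by
    intro f g'
    rw [Module.End.mul_eq_comp, u.conj_comp, Module.End.mul_eq_comp]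
  refine ⟨Matrix.toLinAlgEquiv'.trans ((AlgEquiv.ofLinearEquiv u.conj h1 h2).trans
    Matrix.toLinAlgEquiv'.symm), ?_⟩
  intro x
  apply Matrix.toLinAlgEquiv'.injective
  simp only [AlgEquiv.trans_apply, AlgEquiv.apply_symm_apply, AlgEquiv.ofLinearEquiv_apply]
  apply LinearMap.ext
  intro v
  rw [LinearEquiv.conj_apply_apply, Matrix.toLinAlgEquiv'_apply, Matrix.toLinAlgEquiv'_apply,
    inter x (u.symm v), u.apply_symm_apply]

lemma algHom_injective {n : ℕ} (hn : 0 < n) {C : Type*} [Ring C] [Nontrivial C] [Algebra F C]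
    (f : M F n →ₐ[F] C) : Function.Injective f := by
  haveI : NeZero n := ⟨hn.ne'⟩
  exact RingHom.injective (f.toRingHom)

open Kronecker in
/-- Kronecker with the identity as a unital algebra hom, to product-indexed matrices. -/
noncomputable def kronHom' (n k : ℕ) :
    M F n →ₐ[F] Matrix (Fin n × Fin k) (Fin n × Fin k) F where
  toFun x := x ⊗ₖ (1 : M F k)
  map_one' := Matrix.one_kronecker_one
  map_mul' x y := by rw [← Matrix.mul_kronecker_mul, one_mul]
  map_zero' := Matrix.zero_kronecker _
  map_add' x y := Matrix.add_kronecker x y _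
  commutes' r := by
    show (algebraMap F (M F n) r) ⊗ₖ (1 : M F k) = _
    rw [Algebra.algebraMap_eq_smul_one, Algebra.algebraMap_eq_smul_one,
      Matrix.smul_kronecker, Matrix.one_kronecker_one]

/-- The Kronecker (block-diagonal) unital embedding `M_n → M_{n·k}`. -/
noncomputable def kronHom (n k : ℕ) : M F n →ₐ[F] M F (n * k) :=
  (Matrix.reindexAlgEquiv F F finProdFinEquiv).toAlgHom.comp (kronHom' n k)

/-- Any unital algebra hom `M_n → M_N` with `n ∣ N` exists. -/
noncomputable def stdHom {n N : ℕ} (h : n ∣ N) : M F n →ₐ[F] M F N :=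
  (Matrix.reindexAlgEquiv F F (finCongr (Nat.mul_div_cancel' h))).toAlgHom.comp
    (kronHom n (N / n))

/-- Extension lemma: a unital hom `M_m → M_N` extends along any unital hom `M_m → M_n`
provided `n ∣ N`. -/
theorem extension {m n N : ℕ} (hm : 0 < m) (hnN : n ∣ N)
    (α : M F m →ₐ[F] M F n) (χ : M F m →ₐ[F] M F N) :
    ∃ Φ : M F n →ₐ[F] M F N, ∀ x, Φ (α x) = χ x := by
  obtain ⟨θ, hθ⟩ := skolem_noether hm ((stdHom hnN).comp α) χ
  exact ⟨θ.toAlgHom.comp (stdHom hnN), fun x => hθ x⟩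

section Abstract

variable {A B : Type*} [Ring A] [Algebra F A] [Ring B] [Algebra F B]

lemma finiteDimensional_of_equiv_matrix {n : ℕ} {P : Subalgebra F A}
    (e : P ≃ₐ[F] M F n) : FiniteDimensional F P :=
  Module.Finite.equiv e.symm.toLinearEquiv

/-- A finite-dimensional subalgebra admits a finite "spanning" control set. -/
lemma exists_control_finset (P : Subalgebra F A) [FiniteDimensional F P] :
    ∃ s : Finset A, (↑s : Set A) ⊆ (P : Set A) ∧
      ∀ C : Subalgebra F A, (↑s : Set A) ⊆ (C : Set A) → P ≤ C := by
  classical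
  obtain ⟨(t : Finset P), ht⟩ := Module.finite_def.mp ‹FiniteDimensional F P›
  -- t : Finset P spanning P
  refine ⟨t.image (fun p : P => (p : A)), ?_, ?_⟩
  · intro x hx
    rw [Finset.coe_image] at hx
    obtain ⟨p, -, rfl⟩ := hx
    exact p.2
  · intro C hC x hx
    have hmem : x ∈ Submodule.map P.toSubmodule.subtype (Submodule.span F (t : Set P)) :=
      ⟨⟨x, hx⟩, by rw [ht]; trivial, rfl⟩
    rw [Submodule.map_span] at hmem
    have hle : Submodule.span F (P.toSubmodule.subtype '' (t : Set P)) ≤ C.toSubmodule := by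
      rw [Submodule.span_le]
      rintro y ⟨p, hp, rfl⟩
      apply hC
      rw [Finset.coe_image]
      exact Set.mem_image_of_mem _ hp
    exact hle hmem

/-- The local-matrix property, restated with `M`. -/
def LocMat (A : Type*) [Ring A] [Algebra F A] : Prop :=
  ∀ s : Finset A, ∃ (n : ℕ) (S : Subalgebra F A), 0 < n ∧ (s : Set A) ⊆ S ∧
    Nonempty (S ≃ₐ[F] M F n)

lemma exists_chain (hA : LocMat (F := F) A) (hdim : Module.rank F A ≤ Cardinal.aleph0) :
    ∃ (S : ℕ → Subalgebra F A) (n : ℕ → ℕ), Monotone S ∧ (∀ i, 0 < n i) ∧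
      (∀ i, Nonempty (S i ≃ₐ[F] M F (n i))) ∧ ∀ a : A, ∃ i, a ∈ S i := by
  classical
  -- a countable spanning family
  obtain ⟨g, hg⟩ : ∃ g : ℕ → A, Submodule.span F (Set.range g) = ⊤ := by
    let b := Module.Basis.ofVectorSpace F A
    have hb : Cardinal.mk (Module.Basis.ofVectorSpaceIndex F A) ≤ Cardinal.aleph0 := by
      rw [b.mk_eq_rank'']; exact hdim
    haveI : Countable (Module.Basis.ofVectorSpaceIndex F A) := Cardinal.mk_le_aleph0_iff.mp hb
    have hcnt : (insert (0:A) (Set.range (b : _ → A))).Countable :=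
      (Set.countable_range _).insert 0
    obtain ⟨g, hgr⟩ := hcnt.exists_eq_range (Set.insert_nonempty _ _)
    refine ⟨g, ?_⟩
    rw [← hgr, Submodule.span_insert_zero, b.span_eq]
  -- the inductive step
  have step : ∀ P : Subalgebra F A, (∃ k, 0 < k ∧ Nonempty (P ≃ₐ[F] M F k)) → ∀ a : A,
      ∃ Q : Subalgebra F A, (∃ k, 0 < k ∧ Nonempty (Q ≃ₐ[F] M F k)) ∧ P ≤ Q ∧ a ∈ Q := by
    intro P hP a
    obtain ⟨k, hk, ⟨e⟩⟩ := hP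
    haveI := finiteDimensional_of_equiv_matrix e
    obtain ⟨s, -, hs⟩ := exists_control_finset P
    obtain ⟨n, Q, hn, hsub, hQ⟩ := hA (insert a s)
    refine ⟨Q, ⟨n, hn, hQ⟩, ?_, ?_⟩
    · exact hs Q fun x hx =>
        hsub (by rw [Finset.coe_insert]; exact Set.mem_insert_of_mem _ hx)
    · exact hsub (by rw [Finset.coe_insert]; exact Set.mem_insert _ _)
  choose stepQ stepPred stepLe stepMem using step
  obtain ⟨n0, S0, hn0, -, hS0⟩ := hA ∅
  let seq : ℕ → {P : Subalgebra F A // ∃ k, 0 < k ∧ Nonempty (P ≃ₐ[F] M F k)} :=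
    fun i => Nat.rec ⟨S0, n0, hn0, hS0⟩ (fun i p => ⟨stepQ p.1 p.2 (g i), stepPred p.1 p.2 (g i)⟩) i
  have hseq : ∀ i, seq (i+1) = ⟨stepQ (seq i).1 (seq i).2 (g i), stepPred (seq i).1 (seq i).2 (g i)⟩ :=
    fun i => rfl
  refine ⟨fun i => (seq i).1, fun i => (seq i).2.choose, ?_, fun i => (seq i).2.choose_spec.1,
    fun i => (seq i).2.choose_spec.2, ?_⟩
  · refine monotone_nat_of_le_succ fun i => ?_
    rw [hseq i]
    exact stepLe (seq i).1 (seq i).2 (g i)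
  · -- coverage
    have hmono : Monotone fun i => (seq i).1 := monotone_nat_of_le_succ fun i => by
      rw [hseq i]; exact stepLe (seq i).1 (seq i).2 (g i)
    have hdir : Directed (· ≤ ·) fun i => (seq i).1 := hmono.directed_le
    intro a
    have ha : a ∈ iSup fun i => (seq i).1 := by
      have hsub : Set.range g ⊆ ((iSup fun i => (seq i).1 : Subalgebra F A) : Set A) := by
        rintro x ⟨i, rfl⟩
        have : g i ∈ (seq (i+1)).1 := by rw [hseq i]; exact stepMem (seq i).1 (seq i).2 (g i)
        exact (Subalgebra.coe_iSup_of_directed hdir).symm ▸ Set.mem_iUnion.mpr ⟨i+1, this⟩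
      have hle : Submodule.span F (Set.range g)
          ≤ Subalgebra.toSubmodule (iSup fun i => (seq i).1) := Submodule.span_le.mpr hsub
      exact hle (hg ▸ Submodule.mem_top)
    rw [← SetLike.mem_coe, Subalgebra.coe_iSup_of_directed hdir] at ha
    exact Set.mem_iUnion.mp ha

lemma dvd_of_le {S T : Subalgebra F A} (h : S ≤ T) {m n : ℕ} (hm : 0 < m)
    (eS : S ≃ₐ[F] M F m) (eT : T ≃ₐ[F] M F n) : m ∣ n :=
  dvd_of_algHom hm (eT.toAlgHom.comp ((Subalgebra.inclusion h).comp eS.symm.toAlgHom))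

/-- Key extension step: an isomorphism `f : P ≃ Q` (with `P ⊆ P' ≅ M_n` in `A`) extends to
`P'`, provided `B` is locally matrix and contains a copy `R ≅ M_n`. -/
theorem ext_step (hB : LocMat (F := F) B) {P P' : Subalgebra F A} (hPP' : P ≤ P')
    {m n : ℕ} (hm : 0 < m) (hn : 0 < n) (e : P ≃ₐ[F] M F m) (e' : P' ≃ₐ[F] M F n)
    {Q : Subalgebra F B} (f : P ≃ₐ[F] Q) {R : Subalgebra F B} (eR : R ≃ₐ[F] M F n) :
    ∃ (Q' : Subalgebra F B) (f' : P' ≃ₐ[F] Q'), Q ≤ Q' ∧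
      ∀ p : P, (f' ⟨(p : A), hPP' p.2⟩ : B) = (f p : B) := by
  classical
  haveI : FiniteDimensional F Q := finiteDimensional_of_equiv_matrix (f.symm.trans e)
  haveI : FiniteDimensional F R := finiteDimensional_of_equiv_matrix eR
  obtain ⟨sQ, -, hsQ⟩ := exists_control_finset Q
  obtain ⟨sR, -, hsR⟩ := exists_control_finset R
  obtain ⟨N, C, hN, hsub, ⟨c⟩⟩ := hB (sQ ∪ sR)
  have hQC : Q ≤ C := hsQ C fun x hx => hsub (by
    rw [Finset.coe_union]; exact Or.inl hx)
  have hRC : R ≤ C := hsR C fun x hx => hsub (by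
    rw [Finset.coe_union]; exact Or.inr hx)
  have hnN : n ∣ N := dvd_of_le hRC hn eR c
  set α : M F m →ₐ[F] M F n :=
    e'.toAlgHom.comp ((Subalgebra.inclusion hPP').comp e.symm.toAlgHom) with hα
  set χ : M F m →ₐ[F] M F N :=
    c.toAlgHom.comp ((Subalgebra.inclusion hQC).comp (f.toAlgHom.comp e.symm.toAlgHom)) with hχ
  obtain ⟨Φ, hΦ⟩ := extension hm hnN α χ
  set ψ : M F n →ₐ[F] B := C.val.comp (c.symm.toAlgHom.comp Φ) with hψ
  have hψinj : Function.Injective ψ := by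
    haveI : NeZero N := ⟨hN.ne'⟩
    have h1 : Function.Injective Φ := algHom_injective hn Φ
    have h2 : Function.Injective (C.val) := Subtype.val_injective
    exact h2.comp ((EquivLike.injective c.symm).comp h1)
  have key : ∀ p : P, ψ (e' ⟨(p : A), hPP' p.2⟩) = (f p : B) := by
    intro p
    have h1 : e' ⟨(p : A), hPP' p.2⟩ = α (e p) := by
      show _ = e' ((Subalgebra.inclusion hPP') (e.symm (e p)))
      rw [e.symm_apply_apply]
      rfl
    rw [h1, show ψ (α (e p)) = C.val (c.symm (Φ (α (e p)))) from rfl, hΦ]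
    show C.val (c.symm (c ((Subalgebra.inclusion hQC) (f (e.symm (e p)))))) = _
    rw [e.symm_apply_apply, c.symm_apply_apply]
    rfl
  refine ⟨ψ.range, e'.trans (AlgEquiv.ofInjective ψ hψinj), ?_, ?_⟩
  · intro q hq
    have : ψ (e' ⟨((f.symm ⟨q, hq⟩ : P) : A), hPP' (f.symm ⟨q, hq⟩).2⟩) = q := by
      rw [key (f.symm ⟨q, hq⟩), f.apply_symm_apply]
    exact ⟨_, this⟩
  · intro p
    show (AlgEquiv.ofInjective ψ hψinj (e' ⟨(p : A), hPP' p.2⟩) : B) = _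
    rw [AlgEquiv.ofInjective_apply, key]

/-- Absorption: any finite-dimensional subalgebra is contained in a chain member with
arbitrarily large index. -/
lemma absorb {S : ℕ → Subalgebra F A} (hSmono : Monotone S) (hScov : ∀ a : A, ∃ i, a ∈ S i)
    (P : Subalgebra F A) [FiniteDimensional F P] (k : ℕ) : ∃ j, k ≤ j ∧ P ≤ S j := by
  classical
  obtain ⟨s, -, hs⟩ := exists_control_finset P
  choose ix hix using fun (x : A) => hScov x
  refine ⟨k ⊔ s.sup ix, le_sup_left, hs _ fun x hx => ?_⟩
  have hxs : x ∈ s := Finset.mem_coe.mp hx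
  exact hSmono (le_sup_of_le_right (Finset.le_sup hxs)) (hix x)

/-- The partial-isomorphism data for the back-and-forth argument. -/
structure Datum (F : Type*) [Field F] (A B : Type*) [Ring A] [Algebra F A] [Ring B]
    [Algebra F B] where
  P : Subalgebra F A
  Q : Subalgebra F B
  f : P ≃ₐ[F] Q
  m : ℕ
  hm : 0 < m
  e : P ≃ₐ[F] M F m

theorem main_iso (hA : LocMat (F := F) A) (hB : LocMat (F := F) B)
    (hdimA : Module.rank F A ≤ Cardinal.aleph0) (hdimB : Module.rank F B ≤ Cardinal.aleph0)
    (hDAB : ∀ n : ℕ, 0 < n → (∃ S : Subalgebra F A, Nonempty (S ≃ₐ[F] M F n)) →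
      ∃ T : Subalgebra F B, Nonempty (T ≃ₐ[F] M F n))
    (hDBA : ∀ n : ℕ, 0 < n → (∃ T : Subalgebra F B, Nonempty (T ≃ₐ[F] M F n)) →
      ∃ S : Subalgebra F A, Nonempty (S ≃ₐ[F] M F n)) :
    Nonempty (A ≃ₐ[F] B) := by
  classical
  obtain ⟨S, nS, hSmono, hnS, hSiso, hScov⟩ := exists_chain hA hdimA
  obtain ⟨T, nT, hTmono, hnT, hTiso, hTcov⟩ := exists_chain hB hdimB
  have step : ∀ (d : Datum F A B) (k : ℕ), ∃ d' : Datum F A B,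
      (d.P ≤ d'.P ∧ d.Q ≤ d'.Q ∧ S k ≤ d'.P ∧ T k ≤ d'.Q) ∧
      ∀ (p : A) (h : p ∈ d.P) (h' : p ∈ d'.P), (d'.f ⟨p, h'⟩ : B) = (d.f ⟨p, h⟩ : B) := by
    intro d k
    haveI : FiniteDimensional F d.P := finiteDimensional_of_equiv_matrix d.e
    obtain ⟨j, hkj, hPle⟩ := absorb hSmono hScov d.P k
    obtain ⟨eS⟩ := hSiso j
    obtain ⟨R, hR⟩ := hDAB (nS j) (hnS j) ⟨S j, hSiso j⟩
    obtain ⟨eR⟩ := hR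
    obtain ⟨Q1, f1, hQQ1, hcomp1⟩ := ext_step hB hPle d.hm (hnS j) d.e eS d.f eR
    haveI : FiniteDimensional F Q1 := finiteDimensional_of_equiv_matrix (f1.symm.trans eS)
    obtain ⟨j', hkj', hQ1le⟩ := absorb hTmono hTcov Q1 k
    obtain ⟨eT⟩ := hTiso j'
    obtain ⟨R', hR'⟩ := hDBA (nT j') (hnT j') ⟨T j', hTiso j'⟩
    obtain ⟨eR'⟩ := hR'
    obtain ⟨P'', f2, hP'P'', hcomp2⟩ :=
      ext_step hA hQ1le (hnS j) (hnT j') (f1.symm.trans eS) eT f1.symm eR'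
    refine ⟨⟨P'', T j', f2.symm, nT j', hnT j', f2.symm.trans eT⟩, ⟨?_, ?_, ?_, ?_⟩, ?_⟩
    · exact hPle.trans hP'P''
    · exact hQQ1.trans hQ1le
    · exact (hSmono hkj).trans hP'P''
    · exact hTmono hkj'
    · intro p h h'
      set pq : Q1 := f1 ⟨p, hPle h⟩ with hpq
      have e1 : (f2 ⟨(pq : B), hQ1le pq.2⟩ : A) = (f1.symm pq : A) := hcomp2 pq
      have e2 : f1.symm pq = ⟨p, hPle h⟩ := f1.symm_apply_apply _
      have e3 : f2 ⟨(pq : B), hQ1le pq.2⟩ = ⟨p, h'⟩ := Subtype.ext (by rw [e1, e2])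
      have e4 : (f2.symm ⟨p, h'⟩ : B) = ((⟨(pq : B), hQ1le pq.2⟩ : T j') : B) := by
        rw [← e3, f2.symm_apply_apply]
      show (f2.symm ⟨p, h'⟩ : B) = _
      rw [e4]
      exact hcomp1 ⟨p, h⟩
  choose stepD stepH using step
  obtain ⟨e0⟩ := hSiso 0
  obtain ⟨R0, hR0⟩ := hDAB (nS 0) (hnS 0) ⟨S 0, hSiso 0⟩
  obtain ⟨eR0⟩ := hR0
  let d0 : Datum F A B := ⟨S 0, R0, e0.trans eR0.symm, nS 0, hnS 0, e0⟩
  let seq : ℕ → Datum F A B := fun k => Nat.rec d0 (fun k d => stepD d k) k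
  have hPmono : Monotone fun k => (seq k).P :=
    monotone_nat_of_le_succ fun k => (stepH (seq k) k).1.1
  have hQmono : Monotone fun k => (seq k).Q :=
    monotone_nat_of_le_succ fun k => (stepH (seq k) k).1.2.1
  have hcoh : ∀ (i j : ℕ), i ≤ j → ∀ (p : A) (hi : p ∈ (seq i).P) (hj : p ∈ (seq j).P),
      ((seq j).f ⟨p, hj⟩ : B) = ((seq i).f ⟨p, hi⟩ : B) := by
    intro i j hij
    induction j, hij using Nat.le_induction with
    | base => intro p hi hj; rfl
    | succ j hij ih =>
      intro p hi hj
      have hpj : p ∈ (seq j).P := hPmono hij hi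
      rw [(stepH (seq j) j).2 p hpj hj]
      exact ih p hi hpj
  have hcovA : ∀ a : A, ∃ k, a ∈ (seq k).P := fun a => by
    obtain ⟨i, hi⟩ := hScov a
    exact ⟨i+1, (stepH (seq i) i).1.2.2.1 hi⟩
  have hcovB : ∀ b : B, ∃ k, b ∈ (seq k).Q := fun b => by
    obtain ⟨i, hi⟩ := hTcov b
    exact ⟨i+1, (stepH (seq i) i).1.2.2.2 hi⟩
  let idx : A → ℕ := fun a => (hcovA a).choose
  have hidx : ∀ a, a ∈ (seq (idx a)).P := fun a => (hcovA a).choose_spec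
  let g : A → B := fun a => ((seq (idx a)).f ⟨a, hidx a⟩ : B)
  have gdef : ∀ (a : A) (k : ℕ) (h : a ∈ (seq k).P), g a = ((seq k).f ⟨a, h⟩ : B) := by
    intro a k h
    have h1 : a ∈ (seq (max k (idx a))).P := hPmono (le_max_left _ _) h
    have e1 := hcoh (idx a) (max k (idx a)) (le_max_right _ _) a (hidx a) h1
    have e2 := hcoh k (max k (idx a)) (le_max_left _ _) a h h1
    exact e1.symm.trans e2
  have hg1 : g 1 = 1 := by
    rw [gdef 1 0 (seq 0).P.one_mem,
      show (⟨1, (seq 0).P.one_mem⟩ : (seq 0).P) = 1 from rfl, _root_.map_one, OneMemClass.coe_one]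
  have hg0 : g 0 = 0 := by
    rw [gdef 0 0 (seq 0).P.zero_mem,
      show (⟨0, (seq 0).P.zero_mem⟩ : (seq 0).P) = 0 from rfl, _root_.map_zero, ZeroMemClass.coe_zero]
  have hgmul : ∀ a b, g (a * b) = g a * g b := by
    intro a b
    obtain ⟨ka, hka⟩ := hcovA a; obtain ⟨kb, hkb⟩ := hcovA b
    have ha : a ∈ (seq (max ka kb)).P := hPmono (le_max_left _ _) hka
    have hb : b ∈ (seq (max ka kb)).P := hPmono (le_max_right _ _) hkb
    rw [gdef a _ ha, gdef b _ hb, gdef (a*b) _ (mul_mem ha hb),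
      show (⟨a*b, mul_mem ha hb⟩ : (seq (max ka kb)).P) = ⟨a, ha⟩ * ⟨b, hb⟩ from rfl, _root_.map_mul,
      MulMemClass.coe_mul]
  have hgadd : ∀ a b, g (a + b) = g a + g b := by
    intro a b
    obtain ⟨ka, hka⟩ := hcovA a; obtain ⟨kb, hkb⟩ := hcovA b
    have ha : a ∈ (seq (max ka kb)).P := hPmono (le_max_left _ _) hka
    have hb : b ∈ (seq (max ka kb)).P := hPmono (le_max_right _ _) hkb
    rw [gdef a _ ha, gdef b _ hb, gdef (a+b) _ (add_mem ha hb),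
      show (⟨a+b, add_mem ha hb⟩ : (seq (max ka kb)).P) = ⟨a, ha⟩ + ⟨b, hb⟩ from rfl, _root_.map_add,
      AddMemClass.coe_add]
  have hgc : ∀ r : F, g (algebraMap F A r) = algebraMap F B r := by
    intro r
    rw [gdef _ 0 ((seq 0).P.algebraMap_mem r),
      show (⟨algebraMap F A r, (seq 0).P.algebraMap_mem r⟩ : (seq 0).P)
        = algebraMap F (seq 0).P r from rfl, AlgEquiv.commutes]
    rfl
  let gh : A →ₐ[F] B :=
    { toFun := g, map_one' := hg1, map_mul' := hgmul, map_zero' := hg0, map_add' := hgadd,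
      commutes' := hgc }
  have hinj : Function.Injective g := by
    intro a b hab
    obtain ⟨ka, hka⟩ := hcovA a; obtain ⟨kb, hkb⟩ := hcovA b
    have ha : a ∈ (seq (max ka kb)).P := hPmono (le_max_left _ _) hka
    have hb : b ∈ (seq (max ka kb)).P := hPmono (le_max_right _ _) hkb
    rw [gdef a _ ha, gdef b _ hb] at hab
    have := (seq (max ka kb)).f.injective (Subtype.ext hab)
    exact congrArg Subtype.val this
  have hsurj : Function.Surjective g := by
    intro b
    obtain ⟨k, hk⟩ := hcovB b
    refine ⟨(((seq k).f.symm ⟨b, hk⟩ : (seq k).P) : A), ?_⟩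
    rw [gdef _ k ((seq k).f.symm ⟨b, hk⟩).2,
      show (⟨(((seq k).f.symm ⟨b, hk⟩ : (seq k).P) : A), ((seq k).f.symm ⟨b, hk⟩).2⟩
        : (seq k).P) = (seq k).f.symm ⟨b, hk⟩ from rfl, (seq k).f.apply_symm_apply]
  exact ⟨AlgEquiv.ofBijective gh ⟨hinj, hsurj⟩⟩

end Abstract

end LMA

theorem stmt_2 (F : Type*) [Field F] (A B : Type*) [Ring A] [Algebra F A]
    [Ring B] [Algebra F B]
    (hA : IsLocallyMatrixAlgebra F A) (hB : IsLocallyMatrixAlgebra F B)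
    (hdimA : Module.rank F A ≤ Cardinal.aleph0)
    (hdimB : Module.rank F B ≤ Cardinal.aleph0) :
    Nonempty (A ≃ₐ[F] B) ↔ matrixDegreeSet F A = matrixDegreeSet F B := by
  constructor
  · rintro ⟨g⟩
    ext n
    simp only [matrixDegreeSet, Set.mem_setOf_eq]
    constructor
    · rintro ⟨hn, S, ⟨e⟩⟩
      exact ⟨hn, S.map g.toAlgHom, ⟨((g.subalgebraMap S).symm.trans e : _)⟩⟩
    · rintro ⟨hn, S, ⟨e⟩⟩
      exact ⟨hn, S.map g.symm.toAlgHom, ⟨((g.symm.subalgebraMap S).symm.trans e : _)⟩⟩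
  · intro hD
    refine LMA.main_iso (fun s => hA s) (fun s => hB s) hdimA hdimB ?_ ?_
    · intro n hn hex
      have hmem : n ∈ matrixDegreeSet F A := ⟨hn, hex⟩
      rw [hD] at hmem
      exact hmem.2
    · intro n hn hex
      have hmem : n ∈ matrixDegreeSet F B := ⟨hn, hex⟩
      rw [← hD] at hmem
      exact hmem.2
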